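/- arXiv:1904.00622 — 4 statements merged into one kernel-verified Lean document; each statement's English description precedes it below -/
import Mathlib

section
/- For γ > 1 and c_v > 0, the function p(ρ,S) = ρ^γ exp(S/(c_v ρ)) defined for ρ > 0, S ∈ ℝ is strictly convex: its Hessian matrix is positive definite at every point of the domain {ρ > 0}. -/
open Real

noncomputable def pres (γ cv ρ S : ℝ) : ℝ := ρ ^ γ * Real.exp (S / (cv * ρ))

lemma hasDerivAt_pres_r (γ cv S r : ℝ) (hcv : 0 < cv) (hr : 0 < r) :
    HasDerivAt (fun r' => pres γ cv r' S)
      (Real.exp (S / (cv * r)) * (γ * r ^ (γ - 1) - S / cv * r ^ (γ - 2))) r := by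
  have h1 : HasDerivAt (fun x : ℝ => x ^ γ) (γ * r ^ (γ - 1)) r :=
    Real.hasDerivAt_rpow_const (Or.inl hr.ne')
  have hne : cv * r ≠ 0 := by positivity
  have hd : HasDerivAt (fun r' : ℝ => cv * r') cv r := by
    simpa using (hasDerivAt_id r).const_mul cv
  have h2 : HasDerivAt (fun r' : ℝ => S / (cv * r'))
      ((0 * (cv * r) - S * cv) / (cv * r) ^ 2) r :=
    (hasDerivAt_const r S).div hd hne
  have h := h1.fun_mul h2.exp
  refine h.congr_deriv ?_
  have e2 : r ^ γ = r ^ (γ - 2) * r ^ (2:ℕ) := by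
    rw [← Real.rpow_natCast r 2, ← Real.rpow_add hr]; norm_num
  have e1 : r ^ (γ - 1) = r ^ (γ - 2) * r := by
    rw [← Real.rpow_add_one hr.ne' (γ - 2)]; congr 1; ring
  rw [e1, e2]
  field_simp
  ring

lemma deriv2_pres_r (γ cv S ρ : ℝ) (hcv : 0 < cv) (hρ : 0 < ρ) :
    deriv (fun r => deriv (fun r' => pres γ cv r' S) r) ρ =
      Real.exp (S / (cv * ρ)) *
        (γ * (γ - 1) * ρ ^ (γ - 2) - (2 * γ - 2) * (S / cv) * ρ ^ (γ - 3)
          + (S / cv) ^ 2 * ρ ^ (γ - 4)) := by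
  have hev : (fun r => deriv (fun r' => pres γ cv r' S) r) =ᶠ[nhds ρ]
      (fun r => Real.exp (S / (cv * r)) * (γ * r ^ (γ - 1) - S / cv * r ^ (γ - 2))) := by
    filter_upwards [IsOpen.mem_nhds isOpen_Ioi hρ] with r hr
    exact (hasDerivAt_pres_r γ cv S r hcv hr).deriv
  rw [hev.deriv_eq]
  have hne : cv * ρ ≠ 0 := by positivity
  have hd : HasDerivAt (fun r' : ℝ => cv * r') cv ρ := by
    simpa using (hasDerivAt_id ρ).const_mul cv
  have h2 : HasDerivAt (fun r' : ℝ => S / (cv * r'))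
      ((0 * (cv * ρ) - S * cv) / (cv * ρ) ^ 2) ρ :=
    (hasDerivAt_const ρ S).div hd hne
  have hp1 : HasDerivAt (fun x : ℝ => x ^ (γ - 1)) ((γ - 1) * ρ ^ (γ - 1 - 1)) ρ :=
    Real.hasDerivAt_rpow_const (Or.inl hρ.ne')
  have hp2 : HasDerivAt (fun x : ℝ => x ^ (γ - 2)) ((γ - 2) * ρ ^ (γ - 2 - 1)) ρ :=
    Real.hasDerivAt_rpow_const (Or.inl hρ.ne')
  have hlin : HasDerivAt (fun r' : ℝ => γ * r' ^ (γ - 1) - S / cv * r' ^ (γ - 2))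
      (γ * ((γ - 1) * ρ ^ (γ - 1 - 1)) - S / cv * ((γ - 2) * ρ ^ (γ - 2 - 1))) ρ :=
    (hp1.const_mul γ).sub (hp2.const_mul (S / cv))
  have h := h2.exp.fun_mul hlin
  rw [h.deriv]
  have ea : ρ ^ (γ - 1 - 1) = ρ ^ (γ - 2) := by congr 1; ring
  have eb : ρ ^ (γ - 2 - 1) = ρ ^ (γ - 3) := by congr 1; ring
  have e1 : ρ ^ (γ - 1) = ρ ^ (γ - 3) * ρ ^ (2:ℕ) := by
    rw [← Real.rpow_natCast ρ 2, ← Real.rpow_add hρ]; congr 1; ring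
  have e2 : ρ ^ (γ - 2) = ρ ^ (γ - 4) * ρ ^ (2:ℕ) := by
    rw [← Real.rpow_natCast ρ 2, ← Real.rpow_add hρ]; congr 1; ring
  have e3 : ρ ^ (γ - 3) = ρ ^ (γ - 4) * ρ := by
    rw [← Real.rpow_add_one hρ.ne' (γ - 4)]; congr 1; ring
  rw [ea, eb]
  rw [e1, e2, e3]
  field_simp
  ring_nf

lemma deriv_pres_S (γ cv ρ s : ℝ) (hcv : 0 < cv) (hρ : 0 < ρ) :
    deriv (fun s' => pres γ cv ρ s') s
      = ρ ^ γ * (Real.exp (s / (cv * ρ)) * (1 / (cv * ρ))) := by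
  have h : HasDerivAt (fun s' : ℝ => pres γ cv ρ s')
      (ρ ^ γ * (Real.exp (s / (cv * ρ)) * (1 / (cv * ρ)))) s := by
    have := (((hasDerivAt_id s).div_const (cv * ρ)).exp).const_mul (ρ ^ γ)
    simpa [pres, div_eq_mul_inv] using this
  exact h.deriv

lemma deriv2_pres_S (γ cv ρ S : ℝ) (hcv : 0 < cv) (hρ : 0 < ρ) :
    deriv (fun s => deriv (fun s' => pres γ cv ρ s') s) S
      = ρ ^ γ * Real.exp (S / (cv * ρ)) / (cv * ρ) ^ 2 := by
  have he : (fun s => deriv (fun s' => pres γ cv ρ s') s)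
      = fun s => ρ ^ γ * (Real.exp (s / (cv * ρ)) * (1 / (cv * ρ))) := by
    funext s; exact deriv_pres_S γ cv ρ s hcv hρ
  rw [he]
  have h : HasDerivAt (fun s : ℝ => ρ ^ γ * (Real.exp (s / (cv * ρ)) * (1 / (cv * ρ))))
      (ρ ^ γ * (Real.exp (S / (cv * ρ)) * (1 / (cv * ρ)) * (1 / (cv * ρ)))) S := by
    have := ((((hasDerivAt_id S).div_const (cv * ρ)).exp).mul_const (1 / (cv * ρ))).const_mul (ρ ^ γ)
    simpa [div_eq_mul_inv] using this
  rw [h.deriv]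
  have hne : cv * ρ ≠ 0 := by positivity
  field_simp

lemma deriv_mixed (γ cv ρ S : ℝ) (hcv : 0 < cv) (hρ : 0 < ρ) :
    deriv (fun s => deriv (fun r => pres γ cv r s) ρ) S
      = Real.exp (S / (cv * ρ)) * ((γ - 1) * ρ ^ (γ - 2) - S / cv * ρ ^ (γ - 3)) / cv := by
  have he : (fun s => deriv (fun r => pres γ cv r s) ρ)
      = fun s => Real.exp (s / (cv * ρ)) * (γ * ρ ^ (γ - 1) - s / cv * ρ ^ (γ - 2)) := by
    funext s; exact (hasDerivAt_pres_r γ cv s ρ hcv hρ).deriv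
  rw [he]
  have hexp : HasDerivAt (fun s : ℝ => Real.exp (s / (cv * ρ)))
      (Real.exp (S / (cv * ρ)) * (1 / (cv * ρ))) S := by
    simpa using ((hasDerivAt_id S).div_const (cv * ρ)).exp
  have hlin : HasDerivAt (fun s : ℝ => γ * ρ ^ (γ - 1) - s / cv * ρ ^ (γ - 2))
      (0 - 1 / cv * ρ ^ (γ - 2)) S := by
    have := (hasDerivAt_const S (γ * ρ ^ (γ - 1))).fun_sub
      (((hasDerivAt_id S).div_const cv).mul_const (ρ ^ (γ - 2)))
    simpa using this
  have h := hexp.fun_mul hlin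
  rw [h.deriv]
  have e1 : ρ ^ (γ - 1) = ρ ^ (γ - 2) * ρ := by
    rw [← Real.rpow_add_one hρ.ne' (γ - 2)]; congr 1; ring
  have e2 : ρ ^ (γ - 2) = ρ ^ (γ - 3) * ρ := by
    rw [← Real.rpow_add_one hρ.ne' (γ - 3)]; congr 1; ring
  have hne : cv * ρ ≠ 0 := by positivity
  rw [e1, e2]
  field_simp
  ring

/-- Strict convexity of the pressure `p(ρ,S) = ρ^γ exp(S/(c_v ρ))` on `{ρ > 0}`:
its Hessian is positive definite (positive `∂²p/∂ρ²` and positive determinant). -/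
theorem pressure_strictly_convex (γ cv : ℝ) (hγ : 1 < γ) (hcv : 0 < cv) :
    ∀ ρ S : ℝ, 0 < ρ →
      0 < deriv (fun r => deriv (fun r' => pres γ cv r' S) r) ρ ∧
      0 < deriv (fun r => deriv (fun r' => pres γ cv r' S) r) ρ *
            deriv (fun s => deriv (fun s' => pres γ cv ρ s') s) S -
          (deriv (fun s => deriv (fun r => pres γ cv r s) ρ) S) ^ 2 := by
  intro ρ S hρ
  rw [deriv2_pres_r γ cv S ρ hcv hρ, deriv2_pres_S γ cv ρ S hcv hρ,
    deriv_mixed γ cv ρ S hcv hρ]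
  set E := Real.exp (S / (cv * ρ)) with hE
  have hEpos : 0 < E := Real.exp_pos _
  set x := S / cv with hx
  have hd : (0:ℝ) < ρ ^ (γ - 4) := Real.rpow_pos_of_pos hρ _
  have ec : ρ ^ (γ - 3) = ρ ^ (γ - 4) * ρ := by
    rw [← Real.rpow_add_one hρ.ne' (γ - 4)]; congr 1; ring
  have eb : ρ ^ (γ - 2) = ρ ^ (γ - 4) * ρ * ρ := by
    rw [ec.symm, ← Real.rpow_add_one hρ.ne' (γ - 3)]; congr 1; ring
  have eg1 : ρ ^ (γ - 1) = ρ ^ (γ - 2) * ρ := by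
    rw [← Real.rpow_add_one hρ.ne' (γ - 2)]; congr 1; ring
  have eg2 : ρ ^ γ = ρ ^ (γ - 1) * ρ := by
    rw [← Real.rpow_add_one hρ.ne' (γ - 1)]; congr 1; ring
  have eg : ρ ^ γ = ρ ^ (γ - 4) * ρ * ρ * ρ * ρ := by
    rw [eg2, eg1, eb]
  rw [ec, eb, eg]
  set d := ρ ^ (γ - 4) with hdd
  constructor
  · have key : γ * (γ - 1) * (d * ρ * ρ) - (2 * γ - 2) * x * (d * ρ) + x ^ 2 * d
        = d * ((x - (γ - 1) * ρ) ^ 2 + (γ - 1) * ρ ^ 2) := by ring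
    rw [key]
    have h1 : 0 < (x - (γ - 1) * ρ) ^ 2 + (γ - 1) * ρ ^ 2 := by nlinarith [sq_nonneg (x - (γ - 1) * ρ), mul_pos (sub_pos.mpr hγ) (pow_pos hρ 2)]
    exact mul_pos hEpos (mul_pos hd h1)
  · have key : E * (γ * (γ - 1) * (d * ρ * ρ) - (2 * γ - 2) * x * (d * ρ) + x ^ 2 * d) *
          (d * ρ * ρ * ρ * ρ * E / (cv * ρ) ^ 2) -
        (E * ((γ - 1) * (d * ρ * ρ) - x * (d * ρ)) / cv) ^ 2
        = E ^ 2 * (γ - 1) * (d * ρ * ρ) ^ 2 / cv ^ 2 := by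
      field_simp
      ring
    rw [key]
    have h1 : 0 < d * ρ * ρ := mul_pos (mul_pos hd hρ) hρ
    have h2 : 0 < γ - 1 := by linarith
    exact div_pos (mul_pos (mul_pos (pow_pos hEpos 2) h2) (pow_pos h1 2)) (pow_pos hcv 2)
end

section
/- The extension of ρ^γ exp(S/(c_v ρ)) to ρ = 0 by the value 0 when S ≤ 0 and +∞ when S > 0 yields a convex lower semicontinuous function on [0,∞) × ℝ with values in [0,∞]. -/
open scoped ENNReal

/-- The extended pressure: `ρ^γ exp(S/(c_v ρ))` for `ρ > 0`, `0` for `ρ = 0, S ≤ 0`,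
and `+∞` for `ρ = 0, S > 0`. -/
noncomputable def pressExt (γ cv : ℝ) (x : ℝ × ℝ) : ℝ≥0∞ :=
  if 0 < x.1 then ENNReal.ofReal (x.1 ^ γ * Real.exp (x.2 / (cv * x.1)))
  else if x.2 ≤ 0 then 0 else ∞

lemma key1 {γ : ℝ} (hγ : 1 < γ) {u : ℝ} (hu : 0 < u) (t : ℝ) :
    1 + γ * (u - 1) + u * t ≤ u ^ γ * Real.exp t := by
  have hlog : u - 1 ≤ u * Real.log u := by
    have h := Real.log_le_sub_one_of_pos (show (0:ℝ) < 1 / u by positivity)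
    rw [Real.log_div one_ne_zero (ne_of_gt hu), Real.log_one, zero_sub] at h
    have h2 := mul_le_mul_of_nonneg_left h hu.le
    have huu : u * (1 / u - 1) = 1 - u := by field_simp
    nlinarith
  have hexp : 1 + (t - (1 - γ) * Real.log u) ≤ Real.exp (t - (1 - γ) * Real.log u) := by
    linarith [Real.add_one_le_exp (t - (1 - γ) * Real.log u)]
  have hid : u ^ γ * Real.exp t = u * Real.exp (t - (1 - γ) * Real.log u) := by
    rw [Real.rpow_def_of_pos hu, ← Real.exp_add]
    nth_rewrite 2 [← Real.exp_log hu]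
    rw [← Real.exp_add]
    ring_nf
  rw [hid]
  have h2 : u * (1 + (t - (1 - γ) * Real.log u)) ≤ u * Real.exp (t - (1 - γ) * Real.log u) :=
    mul_le_mul_of_nonneg_left hexp hu.le
  nlinarith [hlog, hu, hγ]

lemma tangent_pos {γ cv : ℝ} (hγ : 1 < γ) (hcv : 0 < cv) {ρ₀ S₀ ρ S : ℝ}
    (h0 : 0 < ρ₀) (h : 0 < ρ) :
    ρ₀ ^ γ * Real.exp (S₀ / (cv * ρ₀))
      + ρ₀ ^ (γ - 1) * Real.exp (S₀ / (cv * ρ₀)) * (γ - S₀ / (cv * ρ₀)) * (ρ - ρ₀)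
      + ρ₀ ^ (γ - 1) * Real.exp (S₀ / (cv * ρ₀)) / cv * (S - S₀)
      ≤ ρ ^ γ * Real.exp (S / (cv * ρ)) := by
  have hk := key1 hγ (show (0:ℝ) < ρ / ρ₀ by positivity) (S / (cv * ρ) - S₀ / (cv * ρ₀))
  set u : ℝ := ρ / ρ₀ with hu
  set t : ℝ := S / (cv * ρ) - S₀ / (cv * ρ₀) with ht
  have hρ₀γ : ρ₀ ^ γ = ρ₀ ^ (γ - 1) * ρ₀ := by
    rw [← Real.rpow_add_one h0.ne' (γ - 1)]; ring_nf
  have hE₀ : (0:ℝ) < Real.exp (S₀ / (cv * ρ₀)) := Real.exp_pos _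
  have hA : (0:ℝ) < ρ₀ ^ (γ - 1) := Real.rpow_pos_of_pos h0 _
  have hf₀ : (0:ℝ) < ρ₀ ^ γ * Real.exp (S₀ / (cv * ρ₀)) := by positivity
  have hmul := mul_le_mul_of_nonneg_left hk hf₀.le
  have hRHS : ρ₀ ^ γ * Real.exp (S₀ / (cv * ρ₀)) * (u ^ γ * Real.exp t) =
      ρ ^ γ * Real.exp (S / (cv * ρ)) := by
    rw [hu, ht, Real.div_rpow h.le h0.le, Real.exp_sub]
    have : (0:ℝ) < ρ₀ ^ γ := Real.rpow_pos_of_pos h0 _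
    field_simp
  have hLHS : ρ₀ ^ γ * Real.exp (S₀ / (cv * ρ₀)) * (1 + γ * (u - 1) + u * t) =
      ρ₀ ^ γ * Real.exp (S₀ / (cv * ρ₀))
      + ρ₀ ^ (γ - 1) * Real.exp (S₀ / (cv * ρ₀)) * (γ - S₀ / (cv * ρ₀)) * (ρ - ρ₀)
      + ρ₀ ^ (γ - 1) * Real.exp (S₀ / (cv * ρ₀)) / cv * (S - S₀) := by
    rw [hu, ht, hρ₀γ]
    field_simp
    ring
  rw [hLHS, hRHS] at hmul
  exact hmul

lemma tangent_zero {γ cv : ℝ} (hγ : 1 < γ) (hcv : 0 < cv) {ρ₀ S₀ S : ℝ}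
    (h0 : 0 < ρ₀) (hS : S ≤ 0) :
    ρ₀ ^ γ * Real.exp (S₀ / (cv * ρ₀))
      + ρ₀ ^ (γ - 1) * Real.exp (S₀ / (cv * ρ₀)) * (γ - S₀ / (cv * ρ₀)) * (0 - ρ₀)
      + ρ₀ ^ (γ - 1) * Real.exp (S₀ / (cv * ρ₀)) / cv * (S - S₀) ≤ 0 := by
  have hρ₀γ : ρ₀ ^ γ = ρ₀ ^ (γ - 1) * ρ₀ := by
    rw [← Real.rpow_add_one h0.ne' (γ - 1)]; ring_nf
  have hE₀ : (0:ℝ) < Real.exp (S₀ / (cv * ρ₀)) := Real.exp_pos _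
  have hA : (0:ℝ) < ρ₀ ^ (γ - 1) := Real.rpow_pos_of_pos h0 _
  have hid : ρ₀ ^ γ * Real.exp (S₀ / (cv * ρ₀))
      + ρ₀ ^ (γ - 1) * Real.exp (S₀ / (cv * ρ₀)) * (γ - S₀ / (cv * ρ₀)) * (0 - ρ₀)
      + ρ₀ ^ (γ - 1) * Real.exp (S₀ / (cv * ρ₀)) / cv * (S - S₀)
      = ρ₀ ^ (γ - 1) * ρ₀ * Real.exp (S₀ / (cv * ρ₀)) * (1 - γ)
        + ρ₀ ^ (γ - 1) * Real.exp (S₀ / (cv * ρ₀)) * S / cv := by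
    rw [hρ₀γ]; field_simp; ring
  rw [hid]
  have h1 : ρ₀ ^ (γ - 1) * ρ₀ * Real.exp (S₀ / (cv * ρ₀)) * (1 - γ) ≤ 0 :=
    mul_nonpos_of_nonneg_of_nonpos (by positivity) (by linarith)
  have h2 : ρ₀ ^ (γ - 1) * Real.exp (S₀ / (cv * ρ₀)) * S / cv ≤ 0 := by
    apply div_nonpos_of_nonpos_of_nonneg _ hcv.le
    exact mul_nonpos_of_nonneg_of_nonpos (by positivity) hS
  linarith

lemma affine_comb (F0 a b ρ σ x1 x2 y1 y2 t : ℝ) (h1 : ρ = t * x1 + (1 - t) * y1)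
    (h2 : σ = t * x2 + (1 - t) * y2) :
    t * (F0 + a * (x1 - ρ) + b * (x2 - σ)) + (1 - t) * (F0 + a * (y1 - ρ) + b * (y2 - σ)) = F0 := by
  subst h1 h2; ring

/-- The extension of `ρ^γ exp(S/(c_v ρ))` by `0` for `ρ = 0, S ≤ 0` and `+∞` for
`ρ = 0, S > 0` is convex and lower semicontinuous on `[0,∞) × ℝ` with values in `[0,∞]`. -/
theorem pressExt_convex_lsc (γ cv : ℝ) (hγ : 1 < γ) (hcv : 0 < cv) :
    (∀ x y : ℝ × ℝ, 0 ≤ x.1 → 0 ≤ y.1 → ∀ t : ℝ, 0 ≤ t → t ≤ 1 →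
        pressExt γ cv (t • x + (1 - t) • y) ≤
          ENNReal.ofReal t * pressExt γ cv x + ENNReal.ofReal (1 - t) * pressExt γ cv y) ∧
    LowerSemicontinuousOn (pressExt γ cv) {x | 0 ≤ x.1} := by
  constructor
  · intro x y hx hy t ht0 ht1
    have hz1 : (t • x + (1 - t) • y).1 = t * x.1 + (1 - t) * y.1 := rfl
    have hz2 : (t • x + (1 - t) • y).2 = t * x.2 + (1 - t) * y.2 := rfl
    have hxx : 0 ≤ t * x.1 := mul_nonneg ht0 hx
    have hyy : 0 ≤ (1 - t) * y.1 := mul_nonneg (by linarith) hy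
    rcases lt_or_eq_of_le (show (0:ℝ) ≤ t * x.1 + (1 - t) * y.1 by linarith) with hp | hp
    · -- interior case
      set ρ : ℝ := t * x.1 + (1 - t) * y.1 with hρ
      set σ : ℝ := t * x.2 + (1 - t) * y.2 with hσ
      set F0 : ℝ := ρ ^ γ * Real.exp (σ / (cv * ρ)) with hF0
      set a : ℝ := ρ ^ (γ - 1) * Real.exp (σ / (cv * ρ)) * (γ - σ / (cv * ρ)) with ha
      set b : ℝ := ρ ^ (γ - 1) * Real.exp (σ / (cv * ρ)) / cv with hb
      have claim : ∀ w : ℝ × ℝ, 0 ≤ w.1 →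
          ENNReal.ofReal (F0 + a * (w.1 - ρ) + b * (w.2 - σ)) ≤ pressExt γ cv w := by
        intro w hw
        rcases hw.lt_or_eq with hwp | hw0
        · rw [pressExt, if_pos hwp]
          exact ENNReal.ofReal_le_ofReal (tangent_pos hγ hcv hp hwp)
        · rw [pressExt, if_neg (by rw [← hw0]; exact lt_irrefl 0)]
          by_cases hw2 : w.2 ≤ 0
          · rw [if_pos hw2]
            refine le_of_eq (ENNReal.ofReal_eq_zero.mpr ?_)
            rw [← hw0]
            exact tangent_zero hγ hcv hp hw2
          · rw [if_neg hw2]; exact le_top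
      have hLz : pressExt γ cv (t • x + (1 - t) • y) = ENNReal.ofReal F0 := by
        rw [pressExt, hz1, hz2, if_pos hp]
      rw [hLz]
      calc ENNReal.ofReal F0
          = ENNReal.ofReal (t * (F0 + a * (x.1 - ρ) + b * (x.2 - σ))
              + (1 - t) * (F0 + a * (y.1 - ρ) + b * (y.2 - σ))) := by
            rw [affine_comb F0 a b ρ σ x.1 x.2 y.1 y.2 t hρ hσ]
        _ ≤ ENNReal.ofReal (t * (F0 + a * (x.1 - ρ) + b * (x.2 - σ)))
              + ENNReal.ofReal ((1 - t) * (F0 + a * (y.1 - ρ) + b * (y.2 - σ))) :=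
            ENNReal.ofReal_add_le
        _ = ENNReal.ofReal t * ENNReal.ofReal (F0 + a * (x.1 - ρ) + b * (x.2 - σ))
              + ENNReal.ofReal (1 - t) * ENNReal.ofReal (F0 + a * (y.1 - ρ) + b * (y.2 - σ)) := by
            rw [ENNReal.ofReal_mul ht0, ENNReal.ofReal_mul (by linarith : (0:ℝ) ≤ 1 - t)]
        _ ≤ ENNReal.ofReal t * pressExt γ cv x + ENNReal.ofReal (1 - t) * pressExt γ cv y :=
            add_le_add (mul_le_mul_right (claim x hx) _) (mul_le_mul_right (claim y hy) _)
    · -- boundary case : t*x.1 + (1-t)*y.1 = 0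
      by_cases hσ : (t • x + (1 - t) • y).2 ≤ 0
      · rw [pressExt, if_neg (by rw [hz1, ← hp]; exact lt_irrefl 0), if_pos hσ]
        exact zero_le
      · push_neg at hσ
        rw [hz2] at hσ
        have hor : 0 < t * x.2 ∨ 0 < (1 - t) * y.2 := by by_contra hcon; push_neg at hcon; linarith [hcon.1, hcon.2]
        rcases hor with hc | hc
        · have htpos : 0 < t := by
            rcases eq_or_lt_of_le ht0 with h | h
            · rw [← h, zero_mul] at hc; exact absurd hc (lt_irrefl 0)
            · exact h
          have hx2 : 0 < x.2 := by
            by_contra h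
            push_neg at h
            linarith [mul_nonpos_of_nonneg_of_nonpos ht0 h]
          have hx1 : x.1 = 0 := by
            have h1 : t * x.1 = 0 := by linarith
            rcases mul_eq_zero.mp h1 with h | h
            · exact absurd h htpos.ne'
            · exact h
          have hxtop : pressExt γ cv x = ⊤ := by
            rw [pressExt, if_neg (by rw [hx1]; exact lt_irrefl 0), if_neg (not_le.mpr hx2)]
          have htop : ENNReal.ofReal t * pressExt γ cv x = ⊤ := by
            rw [hxtop, ENNReal.mul_top (ne_of_gt (ENNReal.ofReal_pos.mpr htpos))]
          rw [htop, top_add]; exact le_top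
        · have htpos : 0 < 1 - t := by
            rcases eq_or_lt_of_le (show (0:ℝ) ≤ 1 - t by linarith) with h | h
            · rw [← h, zero_mul] at hc; exact absurd hc (lt_irrefl 0)
            · exact h
          have hy2 : 0 < y.2 := by
            by_contra h
            push_neg at h
            linarith [mul_nonpos_of_nonneg_of_nonpos (show (0:ℝ) ≤ 1 - t by linarith) h]
          have hy1 : y.1 = 0 := by
            have h1 : (1 - t) * y.1 = 0 := by linarith
            rcases mul_eq_zero.mp h1 with h | h
            · exact absurd h htpos.ne'
            · exact h
          have hytop : pressExt γ cv y = ⊤ := by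
            rw [pressExt, if_neg (by rw [hy1]; exact lt_irrefl 0), if_neg (not_le.mpr hy2)]
          have htop : ENNReal.ofReal (1 - t) * pressExt γ cv y = ⊤ := by
            rw [hytop, ENNReal.mul_top (ne_of_gt (ENNReal.ofReal_pos.mpr htpos))]
          rw [htop, add_top]; exact le_top
  · intro z hz
    rcases (show (0:ℝ) ≤ z.1 from hz).lt_or_eq with hpos | hzero
    · -- interior: continuous there
      have hopen : {x : ℝ × ℝ | 0 < x.1} ∈ nhds z :=
        (isOpen_lt continuous_const continuous_fst).mem_nhds hpos
      have hev : pressExt γ cv =ᶠ[nhds z]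
          fun x : ℝ × ℝ => ENNReal.ofReal (x.1 ^ γ * Real.exp (x.2 / (cv * x.1))) := by
        filter_upwards [hopen] with w hw
        rw [pressExt, if_pos hw]
      have hcont : ContinuousAt
          (fun x : ℝ × ℝ => ENNReal.ofReal (x.1 ^ γ * Real.exp (x.2 / (cv * x.1)))) z := by
        apply ENNReal.continuous_ofReal.continuousAt.comp
        apply ContinuousAt.mul
        · exact ContinuousAt.rpow_const continuousAt_fst (Or.inl hpos.ne')
        · exact Real.continuous_exp.continuousAt.comp
            (ContinuousAt.div continuousAt_snd (continuousAt_const.mul continuousAt_fst)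
              (by positivity))
      exact (((continuousAt_congr hev).mpr hcont).lowerSemicontinuousAt).lowerSemicontinuousWithinAt _
    · -- boundary point z.1 = 0
      by_cases hS : z.2 ≤ 0
      · intro c hc
        have h0 : pressExt γ cv z = 0 := by
          rw [pressExt, if_neg (by rw [← hzero]; exact lt_irrefl 0), if_pos hS]
        rw [h0] at hc
        exact absurd hc (by simp)
      · push_neg at hS
        intro c hc
        have hztop : pressExt γ cv z = ⊤ := by
          rw [pressExt, if_neg (by rw [← hzero]; exact lt_irrefl 0), if_neg (not_le.mpr hS)]
        rw [hztop] at hc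
        have hctop : c ≠ ⊤ := hc.ne
        have hKpos : 0 < z.2 / (2 * cv) := by positivity
        have htt : Filter.Tendsto (fun r : ℝ => r ^ γ * Real.exp (z.2 / (2 * cv) / r))
            (nhdsWithin (0:ℝ) (Set.Ioi 0)) Filter.atTop := by
          have h1 := tendsto_exp_mul_div_rpow_atTop γ (z.2 / (2 * cv)) hKpos
          have h2 := h1.comp tendsto_inv_nhdsGT_zero
          apply h2.congr'
          filter_upwards [self_mem_nhdsWithin] with r hr
          have hr' : (0:ℝ) < r := hr
          simp only [Function.comp]
          rw [Real.inv_rpow hr'.le, ← div_eq_mul_inv, div_eq_mul_inv, inv_inv, mul_comm]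
        have hev1 := htt.eventually (Filter.eventually_gt_atTop c.toReal)
        rw [eventually_nhdsWithin_iff] at hev1
        have hf : Filter.Tendsto (fun x : ℝ × ℝ => x.1) (nhds z) (nhds (0:ℝ)) := by
          rw [hzero]; exact continuous_fst.tendsto z
        have hev1' := hf.eventually hev1
        have hev2 : ∀ᶠ x : ℝ × ℝ in nhds z, z.2 / 2 < x.2 :=
          (continuous_snd.tendsto z).eventually (eventually_gt_nhds (by linarith))
        filter_upwards [(hev1'.and hev2).filter_mono nhdsWithin_le_nhds, self_mem_nhdsWithin]
          with w hw hwmem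
        obtain ⟨hw1, hw2⟩ := hw
        have hwnn : (0:ℝ) ≤ w.1 := hwmem
        rcases hwnn.lt_or_eq with hwp | hw0
        · rw [pressExt, if_pos hwp]
          rw [gt_iff_lt, ENNReal.lt_ofReal_iff_toReal_lt hctop]
          have hlow := hw1 hwp
          have hmono : w.1 ^ γ * Real.exp (z.2 / (2 * cv) / w.1)
              ≤ w.1 ^ γ * Real.exp (w.2 / (cv * w.1)) := by
            apply mul_le_mul_of_nonneg_left _ (Real.rpow_nonneg hwp.le γ)
            apply Real.exp_le_exp.mpr
            have hid : z.2 / (2 * cv) / w.1 = (z.2 / 2) / (cv * w.1) := by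
              ring
            rw [hid]
            gcongr
          linarith
        · rw [pressExt, if_neg (by rw [← hw0]; exact lt_irrefl 0),
            if_neg (not_le.mpr (by linarith : (0:ℝ) < w.2))]
          exact hctop.lt_top
end

section
/- Constant states uniquely maximize total entropy at fixed mass and energy: if |Ω| = 1, ρ̄ > 0 and S̄ are constants, ρ, S ∈ L¹(Ω) with ρ ≥ 0, ∫ρ = ρ̄, ∫S ≥ S̄, and ∫ Φ(ρ,S) = Φ(ρ̄, S̄) where Φ(ρ,S) = ρ^γ exp(S/(c_v ρ)) is strictly convex and strictly increasing in S, then ρ = ρ̄ and S = S̄ almost everywhere. -/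
open MeasureTheory
open scoped ENNReal

/-- The extended internal energy `Φ(ρ,S) = ρ^γ exp(S/(c_v ρ))` for `ρ > 0`,
`0` for `ρ = 0, S ≤ 0`, `∞` for `ρ = 0, S > 0`. -/
noncomputable def PhiExt (γ cv : ℝ) (ρ S : ℝ) : ℝ≥0∞ :=
  if 0 < ρ then ENNReal.ofReal (ρ ^ γ * Real.exp (S / (cv * ρ)))
  else if S ≤ 0 then 0 else ∞

/-- Supporting-hyperplane inequality for `Φ` at `(ρbar, Sbar)`, with strictness away
from the contact point. -/
lemma phi_chain (γ cv ρbar Sbar : ℝ) (hγ : 1 < γ) (hcv : 0 < cv) (hρbar : 0 < ρbar)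
    (r s : ℝ) (hr : 0 < r) :
    (ρbar ^ (γ-1) * Real.exp (Sbar/(cv*ρbar)) * (γ - Sbar/(cv*ρbar))) * r
      + (ρbar ^ (γ-1) * Real.exp (Sbar/(cv*ρbar)) / cv) * s
      + (1-γ) * ρbar * (ρbar ^ (γ-1) * Real.exp (Sbar/(cv*ρbar)))
      ≤ r ^ γ * Real.exp (s/(cv*r)) ∧
    ((r ≠ ρbar ∨ s ≠ Sbar) →
    (ρbar ^ (γ-1) * Real.exp (Sbar/(cv*ρbar)) * (γ - Sbar/(cv*ρbar))) * r
      + (ρbar ^ (γ-1) * Real.exp (Sbar/(cv*ρbar)) / cv) * s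
      + (1-γ) * ρbar * (ρbar ^ (γ-1) * Real.exp (Sbar/(cv*ρbar)))
      < r ^ γ * Real.exp (s/(cv*r))) := by
  set K : ℝ := ρbar ^ (γ-1) * Real.exp (Sbar/(cv*ρbar)) with hKdef
  have hK : 0 < K := mul_pos (Real.rpow_pos_of_pos hρbar _) (Real.exp_pos _)
  set t : ℝ := (γ-1) * (Real.log r - Real.log ρbar) + s/(cv*r) - Sbar/(cv*ρbar) with htdef
  -- representation
  have hrep : r ^ γ * Real.exp (s/(cv*r)) = K * r * Real.exp t := by
    rw [htdef, hKdef]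
    rw [show (γ-1) * (Real.log r - Real.log ρbar) + s/(cv*r) - Sbar/(cv*ρbar)
        = (Real.log r * (γ-1) - Real.log ρbar * (γ-1)) + (s/(cv*r) - Sbar/(cv*ρbar)) by ring]
    rw [Real.exp_add, Real.exp_sub, Real.exp_sub,
      ← Real.rpow_def_of_pos hr, ← Real.rpow_def_of_pos hρbar]
    have h1 : r ^ (γ-1) * r = r ^ γ := by
      rw [Real.rpow_sub_one hr.ne']; field_simp
    have h2 : (ρbar:ℝ) ^ (γ-1) ≠ 0 := (Real.rpow_pos_of_pos hρbar _).ne'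
    have h3 : Real.exp (Sbar/(cv*ρbar)) ≠ 0 := (Real.exp_pos _).ne'
    field_simp
    rw [← h1]
    ring
  -- exp bound
  have hexp : K * r * (t + 1) ≤ K * r * Real.exp t := by
    have := Real.add_one_le_exp t
    nlinarith [mul_pos hK hr]
  -- log bound
  have hlog : r - ρbar ≤ r * (Real.log r - Real.log ρbar) := by
    have h1 : Real.log (ρbar/r) ≤ ρbar/r - 1 := Real.log_le_sub_one_of_pos (div_pos hρbar hr)
    rw [Real.log_div hρbar.ne' hr.ne'] at h1
    have h2 : r * (Real.log ρbar - Real.log r) ≤ r * (ρbar/r - 1) :=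
      mul_le_mul_of_nonneg_left h1 hr.le
    have h3 : r * (ρbar/r - 1) = ρbar - r := by field_simp
    nlinarith
  -- expand K*r*(t+1)
  have hexpand : K * r * (t + 1)
      = K * ((γ-1) * (r * (Real.log r - Real.log ρbar)) + s/cv - r*Sbar/(cv*ρbar) + r) := by
    rw [htdef]
    field_simp
  have hB : (K * (γ - Sbar/(cv*ρbar))) * r + (K / cv) * s + (1-γ) * ρbar * K
      ≤ K * r * (t + 1) := by
    rw [hexpand]
    have : (K * (γ - Sbar/(cv*ρbar))) * r + (K / cv) * s + (1-γ) * ρbar * K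
        = K * ((γ-1) * (r - ρbar) + s/cv - r*Sbar/(cv*ρbar) + r) := by ring
    rw [this]
    nlinarith [mul_nonneg (mul_nonneg hK.le (by linarith : (0:ℝ) ≤ γ-1))
      (by linarith : (0:ℝ) ≤ r * (Real.log r - Real.log ρbar) - (r - ρbar))]
  constructor
  · rw [hrep]; exact hB.trans hexp
  · rintro h
    rw [hrep]
    rcases eq_or_ne r ρbar with hrρ | hrρ
    · -- r = ρbar, so s ≠ Sbar, t ≠ 0, strict exp
      have hs : s ≠ Sbar := by tauto
      have ht : t ≠ 0 := by
        rw [htdef, hrρ]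
        intro hc
        apply hs
        have : s / (cv*ρbar) = Sbar / (cv*ρbar) := by linarith
        have hne : cv * ρbar ≠ 0 := (mul_pos hcv hρbar).ne'
        field_simp at this
        exact this
      have hexp' : K * r * (t + 1) < K * r * Real.exp t := by
        have := Real.add_one_lt_exp ht
        nlinarith [mul_pos hK hr]
      exact hB.trans_lt hexp'
    · -- r ≠ ρbar, strict log
      have hlog' : r - ρbar < r * (Real.log r - Real.log ρbar) := by
        have h1 : Real.log (ρbar/r) < ρbar/r - 1 :=
          Real.log_lt_sub_one_of_pos (div_pos hρbar hr) (by
            intro hc; apply hrρ; field_simp at hc; linarith)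
        rw [Real.log_div hρbar.ne' hr.ne'] at h1
        have h2 : r * (Real.log ρbar - Real.log r) < r * (ρbar/r - 1) :=
          (mul_lt_mul_iff_right₀ hr).2 h1
        have h3 : r * (ρbar/r - 1) = ρbar - r := by field_simp
        nlinarith
      have hB' : (K * (γ - Sbar/(cv*ρbar))) * r + (K / cv) * s + (1-γ) * ρbar * K
          < K * r * (t + 1) := by
        rw [hexpand]
        have : (K * (γ - Sbar/(cv*ρbar))) * r + (K / cv) * s + (1-γ) * ρbar * K
            = K * ((γ-1) * (r - ρbar) + s/cv - r*Sbar/(cv*ρbar) + r) := by ring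
        rw [this]
        nlinarith [mul_pos (mul_pos hK (by linarith : (0:ℝ) < γ-1))
          (by linarith : (0:ℝ) < r * (Real.log r - Real.log ρbar) - (r - ρbar))]
      exact hB'.trans_le hexp

lemma phiExt_measurable (γ cv : ℝ) (hγ : 0 ≤ γ) :
    Measurable (fun p : ℝ × ℝ => PhiExt γ cv p.1 p.2) := by
  unfold PhiExt
  apply Measurable.ite (measurableSet_lt measurable_const measurable_fst)
  · apply Measurable.ennreal_ofReal
    apply Measurable.mul
    · exact (Real.continuous_rpow_const hγ).measurable.comp measurable_fst
    · exact (measurable_snd.div (measurable_const.mul measurable_fst)).exp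
  · exact Measurable.ite (measurableSet_le measurable_snd measurable_const)
      measurable_const measurable_const

/-- Constant states uniquely maximize the total entropy at fixed mass and energy:
on a probability space, if `ρ ≥ 0`, `∫ρ = ρ̄ > 0`, `∫S ≥ S̄` and
`∫ Φ(ρ,S) = Φ(ρ̄,S̄)`, then `∫S = S̄` and `ρ = ρ̄`, `S = S̄` almost everywhere. -/
theorem equilibrium_maximizes_entropy (γ cv : ℝ) (hγ : 1 < γ) (hcv : 0 < cv)
    {Ω : Type*} [MeasurableSpace Ω] (μ : Measure Ω) [IsProbabilityMeasure μ]
    (ρ S : Ω → ℝ) (hρi : Integrable ρ μ) (hSi : Integrable S μ)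
    (hρ0 : ∀ᵐ x ∂μ, 0 ≤ ρ x)
    (ρbar Sbar : ℝ) (hρbar : 0 < ρbar)
    (hmass : ∫ x, ρ x ∂μ = ρbar) (hent : Sbar ≤ ∫ x, S x ∂μ)
    (henergy : ∫⁻ x, PhiExt γ cv (ρ x) (S x) ∂μ =
      ENNReal.ofReal (ρbar ^ γ * Real.exp (Sbar / (cv * ρbar)))) :
    (∫ x, S x ∂μ) = Sbar ∧ (∀ᵐ x ∂μ, ρ x = ρbar) ∧ (∀ᵐ x ∂μ, S x = Sbar) := by
  set K : ℝ := ρbar ^ (γ-1) * Real.exp (Sbar/(cv*ρbar)) with hKdef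
  have hK : 0 < K := mul_pos (Real.rpow_pos_of_pos hρbar _) (Real.exp_pos _)
  set a : ℝ := K * (γ - Sbar/(cv*ρbar)) with hadef
  set b : ℝ := K / cv with hbdef
  set C : ℝ := (1-γ) * ρbar * K with hCdef
  have hb : 0 < b := div_pos hK hcv
  have hC : C < 0 := by
    have h1 : 0 < (γ - 1) * ρbar * K := mul_pos (mul_pos (by linarith) hρbar) hK
    rw [hCdef]; nlinarith
  -- the value Φ(ρbar, Sbar) as a real
  have hPhibar : ρbar ^ γ * Real.exp (Sbar/(cv*ρbar)) = ρbar * K := by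
    rw [hKdef, Real.rpow_sub_one hρbar.ne']
    field_simp
  have hPhibar_pos : 0 < ρbar ^ γ * Real.exp (Sbar/(cv*ρbar)) := by
    rw [hPhibar]; positivity
  -- measurability and finiteness
  have hmeas : AEMeasurable (fun x => PhiExt γ cv (ρ x) (S x)) μ :=
    (phiExt_measurable γ cv (by linarith)).comp_aemeasurable
      (hρi.aemeasurable.prodMk hSi.aemeasurable)
  have hItop : ∫⁻ x, PhiExt γ cv (ρ x) (S x) ∂μ ≠ ⊤ := by
    rw [henergy]; exact ENNReal.ofReal_ne_top
  have hfin : ∀ᵐ x ∂μ, PhiExt γ cv (ρ x) (S x) < ⊤ := ae_lt_top' hmeas hItop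
  -- the real-valued energy
  set F : Ω → ℝ := fun x => (PhiExt γ cv (ρ x) (S x)).toReal with hFdef
  have hFint : Integrable F μ := integrable_toReal_of_lintegral_ne_top hmeas hItop
  have hFval : ∫ x, F x ∂μ = ρbar * K := by
    rw [hFdef]
    rw [integral_toReal hmeas hfin, henergy, ENNReal.toReal_ofReal hPhibar_pos.le, hPhibar]
  -- the affine lower bound
  set L : Ω → ℝ := fun x => a * ρ x + b * S x + C with hLdef
  have hLint : Integrable L μ :=
    ((hρi.const_mul a).add (hSi.const_mul b)).add (integrable_const C)
  have hLval : ∫ x, L x ∂μ = a * ρbar + b * (∫ x, S x ∂μ) + C := by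
    simp only [hLdef]
    have h1 : Integrable (fun x => a * ρ x + b * S x) μ :=
      (hρi.const_mul a).add (hSi.const_mul b)
    rw [integral_add h1 (integrable_const C),
      integral_add (hρi.const_mul a) (hSi.const_mul b),
      integral_const_mul, integral_const_mul, hmass, integral_const,
      probReal_univ, one_smul]
  -- pointwise a.e. comparison
  have hpt : ∀ᵐ x ∂μ, L x ≤ F x ∧ (¬(ρ x = ρbar ∧ S x = Sbar) → L x < F x) := by
    filter_upwards [hρ0, hfin] with x hx hxf
    rcases hx.lt_or_eq with hpos | hzero
    · have hkey := phi_chain γ cv ρbar Sbar hγ hcv hρbar (ρ x) (S x) hpos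
      have hPhi : PhiExt γ cv (ρ x) (S x)
          = ENNReal.ofReal ((ρ x) ^ γ * Real.exp (S x / (cv * ρ x))) := if_pos hpos
      have hnn : 0 ≤ (ρ x) ^ γ * Real.exp (S x / (cv * ρ x)) :=
        mul_nonneg (Real.rpow_nonneg hpos.le _) (Real.exp_pos _).le
      have hF : F x = (ρ x) ^ γ * Real.exp (S x / (cv * ρ x)) := by
        simp only [hFdef]; rw [hPhi, ENNReal.toReal_ofReal hnn]
      constructor
      · rw [hF, hLdef]; exact hkey.1
      · intro hne
        rw [hF, hLdef]
        exact hkey.2 (by tauto)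
    · -- ρ x = 0
      have hρx : ρ x = 0 := hzero.symm
      have hS0 : S x ≤ 0 := by
        by_contra hc
        simp [PhiExt, hρx, hc] at hxf
      have hF0 : F x = 0 := by
        simp only [hFdef]; simp [PhiExt, hρx, hS0]
      have hL0 : L x < 0 := by
        rw [hLdef]
        simp only [hρx, mul_zero, zero_add]
        nlinarith [mul_nonpos_of_nonneg_of_nonpos hb.le hS0]
      exact ⟨by rw [hF0]; linarith, fun _ => by rw [hF0]; linarith⟩
  have hmono : ∀ᵐ x ∂μ, L x ≤ F x := hpt.mono fun x hx => hx.1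
  -- the key algebraic identity: the tangent plane value at (ρbar, Sbar)
  have htang : a * ρbar + b * Sbar + C = ρbar * K := by
    rw [hadef, hbdef, hCdef]
    field_simp
    ring
  have hIle : ∫ x, L x ∂μ ≤ ∫ x, F x ∂μ := integral_mono_ae hLint hFint hmono
  rw [hLval, hFval] at hIle
  have hSle : (∫ x, S x ∂μ) ≤ Sbar := by
    by_contra hc
    push_neg at hc
    have : b * Sbar < b * (∫ x, S x ∂μ) := (mul_lt_mul_iff_right₀ hb).2 hc
    linarith
  have hSeq : (∫ x, S x ∂μ) = Sbar := le_antisymm hSle hent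
  -- integrals are equal, so F = L a.e.
  have hIeq : ∫ x, L x ∂μ = ∫ x, F x ∂μ := by
    rw [hLval, hFval, hSeq, htang]
  have hdiff0 : ∫ x, (F x - L x) ∂μ = 0 := by
    rw [integral_sub hFint hLint]; linarith [hIeq]
  have hsubint : Integrable (fun x => F x - L x) μ := hFint.sub hLint
  have hnn : 0 ≤ᵐ[μ] fun x => F x - L x := by
    filter_upwards [hmono] with x hx
    simp only [Pi.zero_apply]
    linarith
  have hae0 : ∀ᵐ x ∂μ, F x - L x = 0 := by
    have h := (integral_eq_zero_iff_of_nonneg_ae hnn hsubint).1 hdiff0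
    filter_upwards [h] with x hx
    simpa using hx
  have hae : ∀ᵐ x ∂μ, ρ x = ρbar ∧ S x = Sbar := by
    filter_upwards [hae0, hpt] with x h0 hx
    by_contra hc
    have := hx.2 hc
    linarith
  exact ⟨hSeq, hae.mono fun x hx => hx.1, hae.mono fun x hx => hx.2⟩
end

section
/- Let λ > 0 and (ζₙ) ⊂ (0,∞) be a sequence closed under addition in the sense that for all n, m there is k with ζₙ + ζₘ = ζ_k. Then the functionals F ↦ ∫₀^∞ e^{−(λ+ζₙ)t} F(t) dt, n ∈ ℕ, separate points of L^∞(0,∞): if all these integrals vanish for some F ∈ L^∞(0,∞), then F = 0 a.e. -/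
open MeasureTheory Set

lemma lerch_cov (z : ℝ) (hz : 0 < z) (g : ℝ → ℝ) :
    ∫ x in Ioo (0:ℝ) 1, g x =
      ∫ t in Ioi (0:ℝ), (z * Real.exp (-z * t)) * g (Real.exp (-z * t)) := by
  have himg : (fun t => Real.exp (-z * t)) '' Ioi 0 = Ioo (0:ℝ) 1 := by
    ext x
    constructor
    · rintro ⟨t, ht, rfl⟩
      refine ⟨Real.exp_pos _, Real.exp_lt_one_iff.2 ?_⟩
      have : (0:ℝ) < t := ht
      nlinarith
    · rintro ⟨hx0, hx1⟩
      refine ⟨-Real.log x / z, ?_, ?_⟩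
      · have hlog : Real.log x < 0 := Real.log_neg hx0 hx1
        simp only [mem_Ioi]
        have : 0 < -Real.log x := by linarith
        positivity
      · show Real.exp (-z * (-Real.log x / z)) = x
        have h9 : -z * (-Real.log x / z) = Real.log x := by field_simp
        rw [h9, Real.exp_log hx0]
  have hderiv : ∀ t ∈ Ioi (0:ℝ),
      HasDerivWithinAt (fun t => Real.exp (-z * t)) (Real.exp (-z * t) * -z) (Ioi 0) t := by
    intro t _
    have h1 : HasDerivAt (fun t : ℝ => -z * t) (-z) t := by
      simpa using (hasDerivAt_id t).const_mul (-z)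
    have := ((Real.hasDerivAt_exp (-z * t)).comp t h1).hasDerivWithinAt (s := Ioi 0)
    simpa [Function.comp_def] using this
  have hinj : InjOn (fun t => Real.exp (-z * t)) (Ioi 0) := by
    intro a _ b _ h
    have h2 := Real.exp_injective h
    have hne : (-z:ℝ) ≠ 0 := by intro h'; rw [neg_eq_zero] at h'; exact hz.ne' h'
    exact mul_left_cancel₀ hne h2
  rw [← himg, integral_image_eq_integral_abs_deriv_smul measurableSet_Ioi hderiv hinj g]
  congr 1
  funext t
  rw [smul_eq_mul, abs_mul, abs_neg, abs_of_pos hz, abs_of_pos (Real.exp_pos _), mul_comm (Real.exp _) z]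

/-- Generalized Lerch theorem: if `(ζₙ)` is a sequence of positive reals closed under
addition and `F ∈ L^∞(0,∞)` has vanishing Laplace transform at every `λ + ζₙ`,
then `F = 0` a.e. on `(0,∞)`. -/
theorem generalized_lerch (l : ℝ) (hl : 0 < l) (ζ : ℕ → ℝ) (hζ : ∀ n, 0 < ζ n)
    (hadd : ∀ n m : ℕ, ∃ k : ℕ, ζ n + ζ m = ζ k)
    (F : ℝ → ℝ) (hF : Measurable F) (M : ℝ) (hbF : ∀ t, |F t| ≤ M)
    (hvanish : ∀ n : ℕ, ∫ t in Ioi (0:ℝ), Real.exp (-(l + ζ n) * t) * F t = 0) :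
    ∀ᵐ t ∂(volume.restrict (Ioi (0:ℝ))), F t = 0 := by
  set z := ζ 0 with hzdef
  have hz : 0 < z := hζ 0
  have hM : 0 ≤ M := (abs_nonneg (F 0)).trans (hbF 0)
  -- multiples of z are in the sequence
  have hmul : ∀ m : ℕ, ∃ k, ((m:ℝ) + 1) * z = ζ k := by
    intro m
    induction m with
    | zero => exact ⟨0, by norm_num [hzdef]⟩
    | succ n ih =>
      obtain ⟨k, hk⟩ := ih
      obtain ⟨k', hk'⟩ := hadd k 0
      exact ⟨k', by push_cast; rw [← hk', ← hk]; ring⟩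
  set c := l / z with hcdef
  -- the transported function on (0,1)
  set f : ℝ → ℝ := fun x =>
    if x ∈ Ioo (0:ℝ) 1 then Real.exp (Real.log x * c) * F (-Real.log x / z) else 0 with hfdef
  have hfm : Measurable f := by
    apply Measurable.ite measurableSet_Ioo
    · exact ((Real.measurable_log.mul_const c).exp.mul
        (hF.comp ((Real.measurable_log.neg).div_const z)))
    · exact measurable_const
  have hfe : ∀ t ∈ Ioi (0:ℝ), f (Real.exp (-z * t)) = Real.exp (-l * t) * F t := by
    intro t ht
    have htpos : (0:ℝ) < t := ht
    have hmem : Real.exp (-z * t) ∈ Ioo (0:ℝ) 1 :=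
      ⟨Real.exp_pos _, Real.exp_lt_one_iff.2 (by nlinarith)⟩
    simp only [hfdef, if_pos hmem, Real.log_exp]
    have h1 : -z * t * c = -l * t := by field_simp [hcdef]; rw [hcdef]; field_simp
    have h2 : -(-z * t) / z = t := by field_simp
    rw [h1, h2]
  have hfb : ∀ x, |f x| ≤ M := by
    intro x
    by_cases hx : x ∈ Ioo (0:ℝ) 1
    · simp only [hfdef, if_pos hx]
      rw [abs_mul, abs_of_pos (Real.exp_pos _)]
      have hexp : Real.exp (Real.log x * c) ≤ 1 := by
        apply Real.exp_le_one_iff.2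
        have hlog : Real.log x < 0 := Real.log_neg hx.1 hx.2
        have hc : 0 < c := div_pos hl hz
        nlinarith
      calc Real.exp (Real.log x * c) * |F (-Real.log x / z)|
          ≤ 1 * M := mul_le_mul hexp (hbF _) (abs_nonneg _) zero_le_one
        _ = M := one_mul M
    · simp only [hfdef, if_neg hx, abs_zero]; exact hM
  have hsupp : Function.support f ⊆ Ioo (0:ℝ) 1 := by
    intro x hx
    by_contra h
    apply hx
    simp only [hfdef]
    exact if_neg h
  have hfIoo : IntegrableOn f (Ioo (0:ℝ) 1) volume := by
    apply Measure.integrableOn_of_bounded (M := M)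
    · simp
    · exact hfm.aestronglyMeasurable
    · exact Filter.Eventually.of_forall fun x => (Real.norm_eq_abs _ ▸ hfb x)
  have hfi : Integrable f volume :=
    (integrableOn_iff_integrable_of_support_subset hsupp).mp hfIoo
  -- vanishing against monomials
  have hkey : ∀ m : ℕ, ∫ x in Ioo (0:ℝ) 1, x ^ m * f x = 0 := by
    intro m
    obtain ⟨k, hk⟩ := hmul m
    rw [lerch_cov z hz]
    have hcongr : ∀ t ∈ Ioi (0:ℝ),
        (z * Real.exp (-z * t)) * (Real.exp (-z * t) ^ m * f (Real.exp (-z * t)))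
          = z * (Real.exp (-(l + ζ k) * t) * F t) := by
      intro t ht
      have e1 : Real.exp (-z * t) * (Real.exp ((m:ℝ) * (-z * t)) * Real.exp (-l * t))
          = Real.exp (-(l + ((m:ℝ) + 1) * z) * t) := by
        rw [← Real.exp_add, ← Real.exp_add]; congr 1; ring
      rw [hfe t ht, ← Real.exp_nat_mul, ← hk, ← e1]
      ring
    rw [setIntegral_congr_fun measurableSet_Ioi hcongr, integral_const_mul, hvanish k, mul_zero]
  -- vanishing against smooth compactly supported functions
  have hsm : ∀ g : ℝ → ℝ, Continuous g → ∫ x, g x • f x = 0 := by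
    intro g hg
    have heq : ∀ x, Set.indicator (Ioo (0:ℝ) 1) (fun x => g x * f x) x = g x • f x := by
      intro x
      by_cases hx : x ∈ Ioo (0:ℝ) 1
      · simp [Set.indicator_of_mem hx, smul_eq_mul]
      · have hfx : f x = 0 := by simp only [hfdef]; exact if_neg hx
        simp [Set.indicator_of_notMem hx, hfx]
    rw [← funext heq, integral_indicator measurableSet_Ioo]
    -- estimate
    set I := ∫ x in Ioo (0:ℝ) 1, g x * f x with hI
    set C := ∫ x in Ioo (0:ℝ) 1, |f x| with hC
    have hCnn : 0 ≤ C := integral_nonneg fun x => abs_nonneg _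
    obtain ⟨B, hB⟩ := (isCompact_Icc : IsCompact (Icc (0:ℝ) 1)).exists_bound_of_continuousOn
      hg.continuousOn
    have habs : ∀ ε > (0:ℝ), |I| ≤ ε := by
      intro ε hε
      set δ := ε / (C + 1) with hδ
      have hδpos : 0 < δ := div_pos hε (by linarith)
      obtain ⟨p, hp⟩ := exists_polynomial_near_of_continuousOn 0 1 g hg.continuousOn δ hδpos
      -- integrability of pieces
      have hpm : Continuous fun x => p.eval x := p.continuous
      obtain ⟨B', hB'⟩ := (isCompact_Icc : IsCompact (Icc (0:ℝ) 1)).exists_bound_of_continuousOn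
        hpm.continuousOn
      have hint_g : IntegrableOn (fun x => g x * f x) (Ioo (0:ℝ) 1) volume := by
        apply Measure.integrableOn_of_bounded (M := B * M)
        · simp
        · exact (hg.measurable.mul hfm).aestronglyMeasurable
        · filter_upwards [ae_restrict_mem measurableSet_Ioo] with x hx
          rw [Real.norm_eq_abs, abs_mul]
          have h1 : |g x| ≤ B := hB x (Ioo_subset_Icc_self hx)
          exact mul_le_mul h1 (hfb x) (abs_nonneg _) ((abs_nonneg _).trans h1)
      have hint_p : IntegrableOn (fun x => p.eval x * f x) (Ioo (0:ℝ) 1) volume := by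
        apply Measure.integrableOn_of_bounded (M := B' * M)
        · simp
        · exact (hpm.measurable.mul hfm).aestronglyMeasurable
        · filter_upwards [ae_restrict_mem measurableSet_Ioo] with x hx
          rw [Real.norm_eq_abs, abs_mul]
          have h1 : |p.eval x| ≤ B' := hB' x (Ioo_subset_Icc_self hx)
          exact mul_le_mul h1 (hfb x) (abs_nonneg _) ((abs_nonneg _).trans h1)
      -- ∫ p f = 0
      have hpf : ∫ x in Ioo (0:ℝ) 1, p.eval x * f x = 0 := by
        have hexp : ∀ x : ℝ, p.eval x * f x
            = ∑ i ∈ Finset.range (p.natDegree + 1), p.coeff i * (x ^ i * f x) := by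
          intro x
          rw [Polynomial.eval_eq_sum_range, Finset.sum_mul]
          exact Finset.sum_congr rfl fun i _ => by ring
        simp_rw [hexp]
        rw [integral_finset_sum]
        · refine Finset.sum_eq_zero fun i _ => ?_
          rw [integral_const_mul, hkey i, mul_zero]
        · intro i _
          apply Measure.integrableOn_of_bounded (M := |p.coeff i| * M)
          · simp
          · exact (measurable_const.mul ((measurable_id.pow_const i).mul hfm)).aestronglyMeasurable
          · filter_upwards [ae_restrict_mem measurableSet_Ioo] with x hx
            rw [Real.norm_eq_abs, abs_mul, abs_mul]
            have hx1 : |x ^ i| ≤ 1 := by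
              rw [abs_pow]
              apply pow_le_one₀ (abs_nonneg x)
              rw [abs_of_pos hx.1]; exact hx.2.le
            calc |p.coeff i| * (|x ^ i| * |f x|)
                ≤ |p.coeff i| * (1 * M) := by
                  apply mul_le_mul_of_nonneg_left _ (abs_nonneg _)
                  exact mul_le_mul hx1 (hfb x) (abs_nonneg _) zero_le_one
              _ = |p.coeff i| * M := by ring
      have hsplit : I = ∫ x in Ioo (0:ℝ) 1, (g x - p.eval x) * f x := by
        rw [hI]
        rw [show (fun x => (g x - Polynomial.eval x p) * f x)
            = fun x => g x * f x - Polynomial.eval x p * f x from funext fun x => by ring]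
        rw [integral_sub hint_g hint_p, hpf, sub_zero]
      rw [hsplit]
      calc |∫ x in Ioo (0:ℝ) 1, (g x - p.eval x) * f x|
          ≤ ∫ x in Ioo (0:ℝ) 1, |(g x - p.eval x) * f x| := by
            exact (Real.norm_eq_abs _ ▸ norm_integral_le_integral_norm _)
        _ ≤ ∫ x in Ioo (0:ℝ) 1, δ * |f x| := by
            apply setIntegral_mono_on
            · apply ((hint_g.sub hint_p).abs).congr
              apply Filter.Eventually.of_forall
              intro x
              simp only [Pi.sub_apply]
              congr 1
              ring
            · exact hfIoo.abs.const_mul δ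
            · exact measurableSet_Ioo
            · intro x hx
              rw [abs_mul]
              apply mul_le_mul_of_nonneg_right _ (abs_nonneg _)
              rw [abs_sub_comm]
              exact (hp x (Ioo_subset_Icc_self hx)).le
        _ = δ * C := by rw [integral_const_mul]
        _ ≤ δ * (C + 1) := by nlinarith
        _ = ε := by field_simp [hδ]; rw [hδ]; exact div_mul_cancel₀ ε (ne_of_gt (by linarith))
    have : |I| ≤ 0 := le_of_forall_pos_le_add (by simpa using habs) -- maybe adjust
    exact abs_nonpos_iff.mp this
  -- conclude f = 0 a.e.
  have hf0 : ∀ᵐ x ∂(volume : Measure ℝ), f x = 0 := by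
    apply ae_eq_zero_of_integral_contDiff_smul_eq_zero hfi.locallyIntegrable
    intro g hg _
    exact hsm g hg.continuous
  -- transfer back
  have h1 : ∫ x in Ioo (0:ℝ) 1, |f x| = 0 := by
    apply integral_eq_zero_of_ae
    exact ae_restrict_of_ae (hf0.mono fun x hx => by simp [hx])
  rw [lerch_cov z hz] at h1
  have hcg : ∫ t in Ioi (0:ℝ), (z * Real.exp (-z * t)) * |f (Real.exp (-z * t))|
      = ∫ t in Ioi (0:ℝ), z * Real.exp (-(l + z) * t) * |F t| := by
    apply setIntegral_congr_fun measurableSet_Ioi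
    intro t ht
    show z * Real.exp (-z * t) * |f (Real.exp (-z * t))| = z * Real.exp (-(l + z) * t) * |F t|
    rw [hfe t ht, abs_mul, abs_of_pos (Real.exp_pos _), ← mul_assoc, mul_assoc z, ← Real.exp_add]
    congr 3
    ring
  have h2 : ∫ t in Ioi (0:ℝ), z * Real.exp (-(l + z) * t) * |F t| = 0 := by
    rw [← hcg]; exact h1
  have h3 : (fun t => z * Real.exp (-(l + z) * t) * |F t|)
      =ᵐ[volume.restrict (Ioi (0:ℝ))] 0 := by
    rw [← integral_eq_zero_iff_of_nonneg]
    · exact h2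
    · intro t; positivity
    · have base : IntegrableOn (fun t => Real.exp (-(l + z) * t)) (Ioi (0:ℝ)) volume :=
        exp_neg_integrableOn_Ioi 0 (by linarith)
      apply Integrable.mono (base.const_mul (z * M))
      · exact ((measurable_const.mul
          (Real.measurable_exp.comp (measurable_id.const_mul (-(l + z))))).mul
          hF.abs).aestronglyMeasurable
      · apply Filter.Eventually.of_forall
        intro t
        have he : (0:ℝ) < Real.exp (-(l + z) * t) := Real.exp_pos _
        have hn1 : 0 ≤ z * Real.exp (-(l + z) * t) * |F t| := by positivity
        have hn2 : 0 ≤ z * M * Real.exp (-(l + z) * t) := mul_nonneg (mul_nonneg hz.le hM) he.le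
        rw [Real.norm_eq_abs, Real.norm_eq_abs, abs_of_nonneg hn1, abs_of_nonneg hn2]
        have h3 := mul_le_mul_of_nonneg_left (hbF t) (le_of_lt (mul_pos hz he))
        nlinarith [h3]
  filter_upwards [h3] with t ht
  have hpos : 0 < z * Real.exp (-(l + z) * t) := by positivity
  have : |F t| = 0 := by
    have h4 : z * Real.exp (-(l + z) * t) * |F t| = 0 := ht
    nlinarith [abs_nonneg (F t)]
  exact abs_eq_zero.mp this
end
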